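/- Let E be a holomorphic vector bundle on X, V_L = J¹(L)⊗L* with projection φ : V_L → O_X, and ψ a holomorphic section of End(E) ⊗ Ṽ_L such that (Id ⊗ φ̃)(ψ) = Id_E. Then ψ ∧ ψ = 0 in H⁰(X, End(E) ⊗ Λ² Ṽ_L), where ∧ combines the Lie bracket on End(E) with the wedge product on Ṽ_L. -/

import Mathlib

open scoped TensorProduct

open TensorProduct LinearMap

section Aux

variable {R : Type} [CommRing R] {A : Type} [Ring A] [Algebra R A]
  {V : Type} [AddCommGroup V] [Module R V]
  {W : Type} [AddCommGroup W] [Module R W]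

/-- The product pairing `(a⊗v, b⊗w) ↦ (a*b) ⊗ (wedge v w)`. -/
noncomputable def Pb (wedge : V →ₗ[R] V →ₗ[R] W) :
    A ⊗[R] V →ₗ[R] A ⊗[R] V →ₗ[R] A ⊗[R] W :=
  TensorProduct.lift (LinearMap.mk₂ R
    (fun a v => TensorProduct.map (LinearMap.mulLeft R a) (wedge v))
    (by intro a a' v; apply TensorProduct.ext'; intro b w
        simp [add_mul, add_tmul])
    (by intro r a v; apply TensorProduct.ext'; intro b w
        simp [smul_mul_assoc, smul_tmul'])
    (by intro a v v'; apply TensorProduct.ext'; intro b w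
        simp [tmul_add])
    (by intro r a v; apply TensorProduct.ext'; intro b w
        simp [tmul_smul]))

@[simp] lemma Pb_tmul (wedge : V →ₗ[R] V →ₗ[R] W) (a b : A) (v w : V) :
    Pb wedge (a ⊗ₜ[R] v) (b ⊗ₜ[R] w) = (a * b) ⊗ₜ[R] (wedge v w) := by
  simp [Pb]

/-- The opposite-product pairing `(a⊗v, b⊗w) ↦ (b*a) ⊗ (wedge v w)`. -/
noncomputable def Pop (wedge : V →ₗ[R] V →ₗ[R] W) :
    A ⊗[R] V →ₗ[R] A ⊗[R] V →ₗ[R] A ⊗[R] W :=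
  TensorProduct.lift (LinearMap.mk₂ R
    (fun a v => TensorProduct.map (LinearMap.mulRight R a) (wedge v))
    (by intro a a' v; apply TensorProduct.ext'; intro b w
        simp [mul_add, add_tmul])
    (by intro r a v; apply TensorProduct.ext'; intro b w
        simp [mul_smul_comm, smul_tmul'])
    (by intro a v v'; apply TensorProduct.ext'; intro b w
        simp [tmul_add])
    (by intro r a v; apply TensorProduct.ext'; intro b w
        simp [tmul_smul]))

@[simp] lemma Pop_tmul (wedge : V →ₗ[R] V →ₗ[R] W) (a b : A) (v w : V) :
    Pop wedge (a ⊗ₜ[R] v) (b ⊗ₜ[R] w) = (b * a) ⊗ₜ[R] (wedge v w) := by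
  simp [Pop]

/-- The pairing `((p ⊗ v), (q ⊗ w)) ↦ mul'(p*q) ⊗ (wedge v w)` on `(A⊗A)⊗V`. -/
noncomputable def mm (wedge : V →ₗ[R] V →ₗ[R] W) :
    (A ⊗[R] A) ⊗[R] V →ₗ[R] (A ⊗[R] A) ⊗[R] V →ₗ[R] A ⊗[R] W :=
  TensorProduct.lift (LinearMap.mk₂ R
    (fun p v => TensorProduct.map ((LinearMap.mul' R A).comp (LinearMap.mulLeft R p)) (wedge v))
    (by intro p p' v; apply TensorProduct.ext'; intro q w
        simp [add_mul, add_tmul])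
    (by intro r p v; apply TensorProduct.ext'; intro q w
        simp [smul_mul_assoc, smul_tmul'])
    (by intro p v v'; apply TensorProduct.ext'; intro q w
        simp [tmul_add])
    (by intro r p v; apply TensorProduct.ext'; intro q w
        simp [tmul_smul]))

@[simp] lemma mm_tmul (wedge : V →ₗ[R] V →ₗ[R] W) (p q : A ⊗[R] A) (v w : V) :
    mm wedge (p ⊗ₜ[R] v) (q ⊗ₜ[R] w)
      = (LinearMap.mul' R A (p * q)) ⊗ₜ[R] (wedge v w) := by
  simp [mm]

/-- `(a⊗v, b⊗w) ↦ (b⊗a) ⊗ (φ w • v)`. -/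
noncomputable def Θa (φ : V →ₗ[R] R) :
    A ⊗[R] V →ₗ[R] A ⊗[R] V →ₗ[R] (A ⊗[R] A) ⊗[R] V :=
  TensorProduct.lift (LinearMap.mk₂ R
    (fun a v => TensorProduct.map ((TensorProduct.mk R A A).flip a) (φ.smulRight v))
    (by intro a a' v
        rw [map_add, TensorProduct.map_add_left])
    (by intro r a v
        rw [map_smul, TensorProduct.map_smul_left])
    (by intro a v v'
        have h : φ.smulRight (v + v') = φ.smulRight v + φ.smulRight v' := by
          ext w; simp [smul_add]
        rw [h, TensorProduct.map_add_right])
    (by intro r a v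
        have h : φ.smulRight (r • v) = r • φ.smulRight v := by
          ext w
          simp only [LinearMap.smulRight_apply, LinearMap.smul_apply]
          rw [smul_comm]
        rw [h, TensorProduct.map_smul_right]))

@[simp] lemma Θa_tmul (φ : V →ₗ[R] R) (a b : A) (v w : V) :
    Θa φ (a ⊗ₜ[R] v) (b ⊗ₜ[R] w) = (b ⊗ₜ[R] a) ⊗ₜ[R] (φ w • v) := by
  simp only [Θa, lift.tmul, LinearMap.mk₂_apply, TensorProduct.map_tmul,
    LinearMap.flip_apply, TensorProduct.mk_apply, LinearMap.smulRight_apply]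

/-- `(a⊗v, b⊗w) ↦ (b⊗a) ⊗ (φ v • w)`. -/
noncomputable def Θb (φ : V →ₗ[R] R) :
    A ⊗[R] V →ₗ[R] A ⊗[R] V →ₗ[R] (A ⊗[R] A) ⊗[R] V :=
  TensorProduct.lift (LinearMap.mk₂ R
    (fun a v => TensorProduct.map ((TensorProduct.mk R A A).flip a)
      (φ v • (LinearMap.id : V →ₗ[R] V)))
    (by intro a a' v
        rw [map_add, TensorProduct.map_add_left])
    (by intro r a v
        rw [map_smul, TensorProduct.map_smul_left])
    (by intro a v v'
        rw [map_add, add_smul, TensorProduct.map_add_right])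
    (by intro r a v
        rw [map_smul, smul_assoc, TensorProduct.map_smul_right]))

@[simp] lemma Θb_tmul (φ : V →ₗ[R] R) (a b : A) (v w : V) :
    Θb φ (a ⊗ₜ[R] v) (b ⊗ₜ[R] w) = (b ⊗ₜ[R] a) ⊗ₜ[R] (φ v • w) := by
  simp only [Θb, lift.tmul, LinearMap.mk₂_apply, TensorProduct.map_tmul,
    LinearMap.flip_apply, TensorProduct.mk_apply, LinearMap.smul_apply,
    LinearMap.id_apply]


/-- `a ⊗ v ↦ (1 ⊗ a) ⊗ v`. -/
noncomputable def ιR : A ⊗[R] V →ₗ[R] (A ⊗[R] A) ⊗[R] V :=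
  TensorProduct.map (Algebra.TensorProduct.includeRight : A →ₐ[R] A ⊗[R] A).toLinearMap
    LinearMap.id

@[simp] lemma ιR_tmul (a : A) (v : V) :
    (ιR : A ⊗[R] V →ₗ[R] (A ⊗[R] A) ⊗[R] V) (a ⊗ₜ[R] v) = ((1 : A) ⊗ₜ[R] a) ⊗ₜ[R] v := by
  simp [ιR]

/-- `a ⊗ v ↦ (a ⊗ 1) ⊗ v`. -/
noncomputable def ιL : A ⊗[R] V →ₗ[R] (A ⊗[R] A) ⊗[R] V :=
  TensorProduct.map
    (Algebra.TensorProduct.includeLeft : A →ₐ[R] A ⊗[R] A).toLinearMap LinearMap.id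

@[simp] lemma ιL_tmul (a : A) (v : V) :
    (ιL : A ⊗[R] V →ₗ[R] (A ⊗[R] A) ⊗[R] V) (a ⊗ₜ[R] v) = (a ⊗ₜ[R] (1 : A)) ⊗ₜ[R] v := by
  simp [ιL]

/-- The contraction `a ⊗ v ↦ φ v • a`. -/
noncomputable def piMap (φ : V →ₗ[R] R) : A ⊗[R] V →ₗ[R] A :=
  (TensorProduct.rid R A).toLinearMap ∘ₗ LinearMap.lTensor A φ

lemma piMap_apply (φ : V →ₗ[R] R) (x : A ⊗[R] V) :
    piMap φ x = TensorProduct.rid R A (LinearMap.lTensor A φ x) := rfl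

@[simp] lemma piMap_tmul (φ : V →ₗ[R] R) (a : A) (v : V) :
    piMap φ (a ⊗ₜ[R] v) = φ v • a := by
  simp [_root_.piMap]

/-- The auxiliary `V`-endomorphism `w ↦ φ w • v - φ v • w`. -/
noncomputable def kmap (φ : V →ₗ[R] R) (v : V) : V →ₗ[R] V :=
  φ.smulRight v - φ v • (LinearMap.id : V →ₗ[R] V)

@[simp] lemma kmap_apply (φ : V →ₗ[R] R) (v w : V) :
    kmap φ v w = φ w • v - φ v • w := by
  simp [kmap]

lemma kmap_add (φ : V →ₗ[R] R) (v v' : V) :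
    kmap φ (v + v') = kmap φ v + kmap φ v' := by
  ext w; simp [smul_add, add_smul]; abel

lemma kmap_smul (φ : V →ₗ[R] R) (r : R) (v : V) :
    kmap φ (r • v) = r • kmap φ v := by
  ext w
  simp only [kmap_apply, LinearMap.smul_apply, smul_sub, map_smul, smul_eq_mul]
  rw [smul_comm, mul_smul]

/-- The combined kernel-valued pairing `(a⊗v, b⊗w) ↦ (b⊗a) ⊗ (φ w • v - φ v • w)`. -/
noncomputable def Θ (φ : V →ₗ[R] R) :
    A ⊗[R] V →ₗ[R] A ⊗[R] V →ₗ[R] (A ⊗[R] A) ⊗[R] V :=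
  TensorProduct.lift (LinearMap.mk₂ R
    (fun a v => TensorProduct.map ((TensorProduct.mk R A A).flip a) (kmap φ v))
    (by intro a a' v
        rw [map_add, TensorProduct.map_add_left])
    (by intro r a v
        rw [map_smul, TensorProduct.map_smul_left])
    (by intro a v v'
        rw [kmap_add, TensorProduct.map_add_right])
    (by intro r a v
        rw [kmap_smul, TensorProduct.map_smul_right]))

@[simp] lemma Θ_tmul (φ : V →ₗ[R] R) (a b : A) (v w : V) :
    Θ φ (a ⊗ₜ[R] v) (b ⊗ₜ[R] w)
      = (b ⊗ₜ[R] a) ⊗ₜ[R] (φ w • v - φ v • w) := by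
  simp only [Θ, lift.tmul, LinearMap.mk₂_apply, TensorProduct.map_tmul,
    LinearMap.flip_apply, TensorProduct.mk_apply, kmap_apply]

lemma key_vanish (φ : V →ₗ[R] R) (wedge : V →ₗ[R] V →ₗ[R] W)
    (h_ker : ∀ v w : V, φ v = 0 → φ w = 0 → wedge v w = 0)
    (x y z t : A ⊗[R] V) :
    mm wedge (Θ φ x y) (Θ φ z t) = 0 := by
  induction x using TensorProduct.induction_on with
  | zero => simp
  | add x x' hx hx' =>
      simp only [map_add, LinearMap.add_apply]
      rw [hx, hx', add_zero]
  | tmul a v =>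
    induction y using TensorProduct.induction_on with
    | zero => simp
    | add y y' hy hy' =>
        simp only [map_add, LinearMap.add_apply]
        rw [hy, hy', add_zero]
    | tmul b w =>
      induction z using TensorProduct.induction_on with
      | zero => simp
      | add z z' hz hz' =>
          simp only [map_add, LinearMap.add_apply]
          rw [hz, hz', add_zero]
      | tmul c x1 =>
        induction t using TensorProduct.induction_on with
        | zero => simp
        | add t t' ht ht' =>
            simp only [map_add, LinearMap.add_apply]
            rw [ht, ht', add_zero]
        | tmul d y1 =>
          rw [Θ_tmul, Θ_tmul, mm_tmul]
          have h1 : φ (φ w • v - φ v • w) = 0 := by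
            simp [smul_eq_mul, mul_comm]
          have h2 : φ (φ y1 • x1 - φ x1 • y1) = 0 := by
            simp [smul_eq_mul, mul_comm]
          rw [h_ker _ _ h1 h2, tmul_zero]

lemma Θa_apply_pi (φ : V →ₗ[R] R) (a : A) (v : V) (y : A ⊗[R] V) :
    Θa φ (a ⊗ₜ[R] v) y = ((piMap φ y) ⊗ₜ[R] a) ⊗ₜ[R] v := by
  induction y using TensorProduct.induction_on with
  | zero => simp [zero_tmul]
  | add y y' hy hy' => simp [map_add, hy, hy', add_tmul]
  | tmul b w => simp [tmul_smul, smul_tmul']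

lemma Θb_pi_apply (φ : V →ₗ[R] R) (b : A) (w : V) (x : A ⊗[R] V) :
    Θb φ x (b ⊗ₜ[R] w) = (b ⊗ₜ[R] (piMap φ x)) ⊗ₜ[R] w := by
  induction x using TensorProduct.induction_on with
  | zero => simp [tmul_zero, zero_tmul]
  | add x x' hx hx' => simp [map_add, LinearMap.add_apply, hx, hx', tmul_add, add_tmul]
  | tmul a v => simp [tmul_smul, smul_tmul']

lemma mm_ιR_ιR (wedge : V →ₗ[R] V →ₗ[R] W) (x y : A ⊗[R] V) :
    mm wedge (ιR x) (ιR y) = Pb wedge x y := by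
  induction x using TensorProduct.induction_on with
  | zero => simp
  | add x x' hx hx' => simp only [map_add, LinearMap.add_apply, hx, hx']
  | tmul a v =>
    induction y using TensorProduct.induction_on with
    | zero => simp
    | add y y' hy hy' => simp only [map_add, hy, hy']
    | tmul b w => simp [Algebra.TensorProduct.tmul_mul_tmul]

lemma mm_ιR_ιL (wedge : V →ₗ[R] V →ₗ[R] W) (x y : A ⊗[R] V) :
    mm wedge (ιR x) (ιL y) = Pop wedge x y := by
  induction x using TensorProduct.induction_on with
  | zero => simp
  | add x x' hx hx' => simp only [map_add, LinearMap.add_apply, hx, hx']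
  | tmul a v =>
    induction y using TensorProduct.induction_on with
    | zero => simp
    | add y y' hy hy' => simp only [map_add, hy, hy']
    | tmul b w => simp [Algebra.TensorProduct.tmul_mul_tmul]

lemma mm_ιL_ιR (wedge : V →ₗ[R] V →ₗ[R] W) (x y : A ⊗[R] V) :
    mm wedge (ιL x) (ιR y) = Pb wedge x y := by
  induction x using TensorProduct.induction_on with
  | zero => simp
  | add x x' hx hx' => simp only [map_add, LinearMap.add_apply, hx, hx']
  | tmul a v =>
    induction y using TensorProduct.induction_on with
    | zero => simp
    | add y y' hy hy' => simp only [map_add, hy, hy']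
    | tmul b w => simp [Algebra.TensorProduct.tmul_mul_tmul]

lemma mm_ιL_ιL (wedge : V →ₗ[R] V →ₗ[R] W) (x y : A ⊗[R] V) :
    mm wedge (ιL x) (ιL y) = Pb wedge x y := by
  induction x using TensorProduct.induction_on with
  | zero => simp
  | add x x' hx hx' => simp only [map_add, LinearMap.add_apply, hx, hx']
  | tmul a v =>
    induction y using TensorProduct.induction_on with
    | zero => simp
    | add y y' hy hy' => simp only [map_add, hy, hy']
    | tmul b w => simp [Algebra.TensorProduct.tmul_mul_tmul]


lemma Θ_eq (φ : V →ₗ[R] R) (x y : A ⊗[R] V) :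
    Θ φ x y = Θa φ x y - Θb φ x y := by
  induction x using TensorProduct.induction_on with
  | zero => simp
  | add x x' hx hx' =>
      simp only [map_add, LinearMap.add_apply, hx, hx']
      abel
  | tmul a v =>
    induction y using TensorProduct.induction_on with
    | zero => simp
    | add y y' hy hy' =>
        simp only [map_add, hy, hy']
        abel
    | tmul b w => simp [tmul_sub]

lemma Θa_absorb (φ : V →ₗ[R] R) (y : A ⊗[R] V) (hy : piMap φ y = 1)
    (x : A ⊗[R] V) : Θa φ x y = ιR x := by
  induction x using TensorProduct.induction_on with
  | zero => simp
  | add x x' hx hx' => simp only [map_add, LinearMap.add_apply, hx, hx']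
  | tmul a v => rw [Θa_apply_pi, hy, ιR_tmul]

lemma Θb_absorb (φ : V →ₗ[R] R) (x : A ⊗[R] V) (hx : piMap φ x = 1)
    (y : A ⊗[R] V) : Θb φ x y = ιL y := by
  induction y using TensorProduct.induction_on with
  | zero => simp
  | add y y' hy hy' => simp only [map_add, hy, hy']
  | tmul b w => rw [Θb_pi_apply, hx, ιL_tmul]

lemma B_eq (wedge : V →ₗ[R] V →ₗ[R] W)
    (B : A ⊗[R] V →ₗ[R] A ⊗[R] V →ₗ[R] A ⊗[R] W)
    (hB : ∀ (a b : A) (v w : V),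
      B (a ⊗ₜ[R] v) (b ⊗ₜ[R] w) = (a * b - b * a) ⊗ₜ[R] (wedge v w))
    (x y : A ⊗[R] V) : B x y = Pb wedge x y - Pop wedge x y := by
  induction x using TensorProduct.induction_on with
  | zero => simp
  | add x x' hx hx' =>
      simp only [map_add, LinearMap.add_apply, hx, hx']
      abel
  | tmul a v =>
    induction y using TensorProduct.induction_on with
    | zero => simp
    | add y y' hy hy' =>
        simp only [map_add, hy, hy']
        abel
    | tmul b w => rw [hB, Pb_tmul, Pop_tmul, sub_tmul]


end Aux

/-!
STATEMENT 6. E a holomorphic vector bundle, Ṽ_L with its projection φ̃ : Ṽ_L → O_X,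
and ψ ∈ H⁰(X, End(E) ⊗ Ṽ_L) with (Id ⊗ φ̃)(ψ) = Id_E.  Then ψ ∧ ψ = 0 in
H⁰(X, End(E) ⊗ Λ²Ṽ_L), where ∧ combines the commutator bracket on End(E) with the
wedge product on Ṽ_L.

Algebraic model: R = ring of functions, A = (noncommutative) R-algebra of sections
of End(E), V = R-module of sections of Ṽ_L with the projection φ : V → R,
W = sections of Λ²Ṽ_L with the alternating pairing `wedge`.  The kernel of φ̃ is the
line bundle K_X(C), whence any two sections of the kernel wedge to zero (`h_ker`).
`B` is the pairing End(E)⊗Ṽ_L × End(E)⊗Ṽ_L → End(E)⊗Λ²Ṽ_L induced by the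
commutator and the wedge (`hB`), and `hψ` says (Id ⊗ φ̃)(ψ) = Id_E = 1 ∈ A.
-/
theorem stmt6
    (R : Type) [CommRing R]
    (A : Type) [Ring A] [Algebra R A]
    (V : Type) [AddCommGroup V] [Module R V]
    (W : Type) [AddCommGroup W] [Module R W]
    (φ : V →ₗ[R] R)
    (wedge : V →ₗ[R] V →ₗ[R] W)
    (h_alt : ∀ v : V, wedge v v = 0)
    (h_ker : ∀ v w : V, φ v = 0 → φ w = 0 → wedge v w = 0)
    (B : TensorProduct R A V →ₗ[R] TensorProduct R A V →ₗ[R] TensorProduct R A W)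
    (hB : ∀ (a b : A) (v w : V),
      B (a ⊗ₜ[R] v) (b ⊗ₜ[R] w) = (a * b - b * a) ⊗ₜ[R] (wedge v w))
    (ψ : TensorProduct R A V)
    (hψ : (TensorProduct.rid R A) ((LinearMap.lTensor A φ) ψ) = 1) :
    B ψ ψ = 0 := by
  have hπ : piMap φ ψ = 1 := hψ
  have key := key_vanish φ wedge h_ker ψ ψ ψ ψ
  have hΘ : Θ φ ψ ψ = ιR ψ - ιL ψ := by
    rw [Θ_eq, Θa_absorb φ ψ hπ, Θb_absorb φ ψ hπ]
  rw [hΘ] at key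
  simp only [map_sub, LinearMap.sub_apply, mm_ιR_ιR, mm_ιR_ιL, mm_ιL_ιR,
    mm_ιL_ιL, sub_self, sub_zero] at key
  rw [zero_sub, neg_eq_zero, sub_eq_zero] at key
  rw [B_eq wedge B hB, sub_eq_zero]
  exact key.symm
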